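/- For a non-increasing null sequence of positive reals (x_n), the quantity sup{α ≥ 0 : Σ_n x_n^{1/α} < ∞} equals sup{α ≥ 0 : lim_{n→∞} x_n · n^α = 0}. -/

import Mathlib

open Filter

lemma AtoB (x : ℕ → ℝ) (hpos : ∀ n, 1 ≤ n → 0 < x n)
    (hmono : ∀ m n, 1 ≤ m → m ≤ n → x n ≤ x m)
    {a b : ℝ} (hsum : Summable (fun n : ℕ => x (n + 1) ^ (1 / a)))
    (hb0 : 0 ≤ b) (hba : b < a) :
    Tendsto (fun n : ℕ => x (n + 1) * ((n : ℝ) + 1) ^ b) atTop (nhds 0) := by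
  have ha : 0 < a := hb0.trans_lt hba
  set f : ℕ → ℝ := fun n => x (n + 1) ^ (1 / a) with hf
  have hfpos : ∀ n, 0 < f n := fun n =>
    Real.rpow_pos_of_pos (hpos (n + 1) (Nat.le_add_left 1 n)) _
  set S : ℝ := ∑' n, f n with hS
  have hS0 : 0 ≤ S := tsum_nonneg fun n => (hfpos n).le
  have key : ∀ n : ℕ, ((n : ℝ) + 1) * f n ≤ S := by
    intro n
    have h1 : ((n : ℝ) + 1) * f n = ∑ i ∈ Finset.range (n + 1), f n := by
      rw [Finset.sum_const, Finset.card_range]; ring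
    rw [h1]
    calc ∑ i ∈ Finset.range (n + 1), f n ≤ ∑ i ∈ Finset.range (n + 1), f i := by
          apply Finset.sum_le_sum
          intro i hi
          exact Real.rpow_le_rpow (hpos _ (Nat.le_add_left 1 n)).le
            (hmono (i + 1) (n + 1) (Nat.le_add_left 1 i)
              (by have := Finset.mem_range.mp hi; omega)) (by positivity)
      _ ≤ S := Summable.sum_le_tsum _ (fun i _ => (hfpos i).le) hsum
  have hx_eq : ∀ n : ℕ, x (n + 1) = f n ^ a := by
    intro n
    rw [hf, ← Real.rpow_mul (hpos (n + 1) (Nat.le_add_left 1 n)).le,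
      one_div_mul_cancel ha.ne', Real.rpow_one]
  have hnpos : ∀ n : ℕ, (0:ℝ) < (n : ℝ) + 1 := fun n => by positivity
  have hbound : ∀ n : ℕ, x (n + 1) * ((n : ℝ) + 1) ^ b ≤ S ^ a * ((n:ℝ) + 1) ^ (b - a) := by
    intro n
    have h2 : f n ≤ S / ((n:ℝ) + 1) := by
      rw [le_div_iff₀ (hnpos n)]; linarith [key n]
    have h3 : x (n + 1) ≤ S ^ a / ((n:ℝ) + 1) ^ a := by
      rw [hx_eq n, ← Real.div_rpow hS0 (hnpos n).le]
      exact Real.rpow_le_rpow (hfpos n).le h2 ha.le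
    have h4 : (0:ℝ) < ((n:ℝ) + 1) ^ b := Real.rpow_pos_of_pos (hnpos n) b
    calc x (n + 1) * ((n : ℝ) + 1) ^ b
        ≤ S ^ a / ((n:ℝ) + 1) ^ a * ((n : ℝ) + 1) ^ b := by
          exact mul_le_mul_of_nonneg_right h3 h4.le
      _ = S ^ a * ((n:ℝ) + 1) ^ (b - a) := by
          rw [Real.rpow_sub (hnpos n)]; ring
  apply squeeze_zero (fun n => ?_) hbound
  · have : Tendsto (fun n : ℕ => ((n:ℝ) + 1) ^ (b - a)) atTop (nhds 0) := by
      have h5 : Tendsto (fun n : ℕ => (n:ℝ) + 1) atTop atTop :=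
        tendsto_atTop_add_const_right _ 1 tendsto_natCast_atTop_atTop
      have h6 := (tendsto_rpow_neg_atTop (y := a - b) (by linarith)).comp h5
      simpa [Function.comp_def, neg_sub] using h6
    simpa using this.const_mul (S ^ a)
  · exact mul_nonneg (hpos _ (Nat.le_add_left 1 n)).le
      (Real.rpow_pos_of_pos (hnpos n) b).le

lemma BtoA (x : ℕ → ℝ) (hpos : ∀ n, 1 ≤ n → 0 < x n)
    {a b : ℝ} (hb : Tendsto (fun n : ℕ => x (n + 1) * ((n : ℝ) + 1) ^ b) atTop (nhds 0))
    (ha0 : 0 < a) (hab : a < b) :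
    Summable (fun n : ℕ => x (n + 1) ^ (1 / a)) := by
  have hnpos : ∀ n : ℕ, (0:ℝ) < (n : ℝ) + 1 := fun n => by positivity
  have hg : Summable (fun n : ℕ => ((n:ℝ) + 1) ^ (-(b / a))) := by
    have hs : Summable (fun n : ℕ => ((n:ℝ)) ^ (-(b / a))) := by
      rw [Real.summable_nat_rpow, neg_lt_neg_iff]
      exact (one_lt_div ha0).mpr hab
    have := (summable_nat_add_iff (f := fun n : ℕ => ((n:ℝ)) ^ (-(b / a))) 1).mpr hs
    simpa using this
  apply summable_of_isBigO_nat hg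
  apply Asymptotics.IsBigO.of_bound 1
  have hev : ∀ᶠ n : ℕ in atTop, x (n + 1) * ((n : ℝ) + 1) ^ b ≤ 1 := by
    have := hb.eventually (ge_mem_nhds (show (0:ℝ) < 1 by norm_num))
    filter_upwards [this] with n h using h
  filter_upwards [hev] with n h
  have hxp := hpos (n + 1) (Nat.le_add_left 1 n)
  have h1 : x (n + 1) ≤ ((n:ℝ) + 1) ^ (-b) := by
    rw [Real.rpow_neg (hnpos n).le, inv_eq_one_div,
      le_div_iff₀ (Real.rpow_pos_of_pos (hnpos n) b)]
    exact h
  have h2 : x (n + 1) ^ (1 / a) ≤ ((n:ℝ) + 1) ^ (-(b / a)) := by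
    calc x (n + 1) ^ (1 / a) ≤ (((n:ℝ) + 1) ^ (-b)) ^ (1 / a) :=
          Real.rpow_le_rpow hxp.le h1 (by positivity)
      _ = ((n:ℝ) + 1) ^ (-(b / a)) := by
          rw [← Real.rpow_mul (hnpos n).le]
          ring_nf
  rw [one_mul, Real.norm_eq_abs, Real.norm_eq_abs,
    abs_of_pos (Real.rpow_pos_of_pos hxp _), abs_of_pos (Real.rpow_pos_of_pos (hnpos n) _)]
  exact h2

theorem stmt0 (x : ℕ → ℝ) (hpos : ∀ n, 1 ≤ n → 0 < x n)
    (hmono : ∀ m n, 1 ≤ m → m ≤ n → x n ≤ x m)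
    (hlim : Tendsto x atTop (nhds 0)) :
    sSup {a : ℝ | 0 ≤ a ∧ Summable (fun n : ℕ => x (n + 1) ^ (1 / a))} =
      sSup {a : ℝ | 0 ≤ a ∧
        Tendsto (fun n : ℕ => x (n + 1) * ((n : ℝ) + 1) ^ a) atTop (nhds 0)} := by
  set A := {a : ℝ | 0 ≤ a ∧ Summable (fun n : ℕ => x (n + 1) ^ (1 / a))} with hA
  set B := {a : ℝ | 0 ≤ a ∧
      Tendsto (fun n : ℕ => x (n + 1) * ((n : ℝ) + 1) ^ a) atTop (nhds 0)} with hB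
  have hAB : ∀ a ∈ A, ∀ b, 0 ≤ b → b < a → b ∈ B := fun a ha b hb0 hba =>
    ⟨hb0, AtoB x hpos hmono ha.2 hb0 hba⟩
  have hBA : ∀ b ∈ B, ∀ a, 0 < a → a < b → a ∈ A := fun b hb a ha0 hab =>
    ⟨ha0.le, BtoA x hpos hb.2 ha0 hab⟩
  have h0B : (0:ℝ) ∈ B := by
    refine ⟨le_refl 0, ?_⟩
    have : Tendsto (fun n : ℕ => x (n + 1)) atTop (nhds 0) :=
      hlim.comp (tendsto_add_atTop_nat 1)
    simpa using this
  by_cases hbB : BddAbove B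
  · -- B bounded above; show A bounded above by sSup B
    have hsupB0 : 0 ≤ sSup B := le_csSup hbB h0B
    have hAle : ∀ a ∈ A, a ≤ sSup B := by
      intro a haA
      rcases eq_or_lt_of_le haA.1 with h | h
      · exact h ▸ hsupB0
      · apply le_of_forall_lt
        intro c hc
        obtain ⟨c', hc'1, hc'2⟩ := exists_between (show max c 0 < a from max_lt hc h)
        have hc'B : c' ∈ B := hAB a haA c' (le_trans (le_max_right c 0) hc'1.le) hc'2
        exact lt_of_le_of_lt (le_max_left c 0) (lt_of_lt_of_le hc'1 (le_csSup hbB hc'B))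
    have hbA : BddAbove A := ⟨sSup B, hAle⟩
    have hsupA0 : 0 ≤ sSup A := by
      rcases Set.eq_empty_or_nonempty A with h | h
      · simp [h, Real.sSup_empty]
      · obtain ⟨a, ha⟩ := h
        exact le_trans ha.1 (le_csSup hbA ha)
    apply le_antisymm
    · rcases Set.eq_empty_or_nonempty A with h | h
      · simp [h, Real.sSup_empty, hsupB0]
      · exact csSup_le h hAle
    · apply csSup_le ⟨0, h0B⟩
      intro b hbB'
      rcases eq_or_lt_of_le hbB'.1 with h | h
      · exact h ▸ hsupA0
      · apply le_of_forall_lt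
        intro c hc
        obtain ⟨c', hc'1, hc'2⟩ := exists_between (show max c 0 < b from max_lt hc h)
        have hc'A : c' ∈ A := hBA b hbB' c' (lt_of_le_of_lt (le_max_right c 0) hc'1) hc'2
        exact lt_of_le_of_lt (le_max_left c 0) (lt_of_lt_of_le hc'1 (le_csSup hbA hc'A))
  · -- B unbounded: A unbounded too, both sSup = 0
    have hbA : ¬ BddAbove A := by
      rw [not_bddAbove_iff] at hbB ⊢
      intro M
      obtain ⟨b, hbB', hbM⟩ := hbB (max M 0 + 1)
      refine ⟨max M 0 + 1, ?_, lt_of_le_of_lt (le_max_left M 0) (lt_add_one _)⟩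
      exact hBA b hbB' _ (by positivity) hbM
    rw [Real.sSup_of_not_bddAbove hbA, Real.sSup_of_not_bddAbove hbB]
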